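/- Positive definiteness of the interior block (core of Lemma 3.1). Assume the subgraph of G induced by the interior node set I is connected, that some interior node i ∈ I is adjacent in G to some boundary node j ∈ B, and that q(i) ≥ 0 for all i ∈ V. Then the interior block (L_{γ,q})_{II} is a symmetric positive definite matrix. -/

import Mathlib

open Matrix BigOperators

/-- The discrete Schrödinger operator `L_{γ,q}` acting on `u : V → ℝ` by
`(L_{γ,q} u)(i) = ∑_j γ(i,j)(u(i) − u(j)) + q(i) u(i)`. -/
noncomputable def Lop {V : Type*} [Fintype V] (γ : V → V → ℝ) (q : V → ℝ)
    (u : V → ℝ) : V → ℝ :=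
  fun i => (∑ j, γ i j * (u i - u j)) + q i * u i

/-- The matrix of the discrete Schrödinger operator `L_{γ,q}`. -/
noncomputable def Lmat {V : Type*} [Fintype V] [DecidableEq V]
    (γ : V → V → ℝ) (q : V → ℝ) : Matrix V V ℝ :=
  Matrix.of fun i j => Lop γ q (Pi.single j 1) i

lemma Lmat_apply {V : Type*} [Fintype V] [DecidableEq V] (γ : V → V → ℝ) (q : V → ℝ) (i j : V) :
    Lmat γ q i j = (if i = j then (∑ k, γ i k) + q i else 0) - γ i j := by
  simp only [Lmat, Lop, Matrix.of_apply, Pi.single_apply]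
  by_cases h : i = j
  · subst h
    simp [mul_sub, Finset.sum_sub_distrib, mul_ite]
    ring
  · simp [h, Ne.symm h, mul_sub, Finset.sum_sub_distrib, mul_ite]

lemma walk_const {V : Type*} (H : SimpleGraph V) (f : V → ℝ)
    (h : ∀ a b, H.Adj a b → f a = f b) :
    ∀ {u v : V}, H.Reachable u v → f u = f v := by
  intro u v hr
  obtain ⟨w⟩ := hr
  induction w with
  | nil => rfl
  | cons ha p ih => exact (h _ _ ha).trans ih


/-- Positive definiteness of the interior block (core of Lemma 3.1): if the subgraph
of `G` induced by the interior `I = Bᶜ` is connected, some interior node is adjacent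
to some boundary node, and `q ≥ 0`, then `(L_{γ,q})_{II}` is symmetric positive
definite. -/
theorem interior_block_posdef
    {V : Type*} [Fintype V] [DecidableEq V]
    (G : SimpleGraph V) [DecidableRel G.Adj]
    (γ : V → V → ℝ) (hsymm : ∀ i j, γ i j = γ j i)
    (hpos : ∀ i j, G.Adj i j → 0 < γ i j)
    (hzero : ∀ i j, ¬ G.Adj i j → γ i j = 0)
    (q : V → ℝ) (hq : ∀ i, 0 ≤ q i)
    (B : Finset V) (hB : B.Nonempty) (hI : (Bᶜ : Finset V).Nonempty)
    (hconn : (G.induce ((Bᶜ : Finset V) : Set V)).Connected)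
    (hadj : ∃ i ∈ (Bᶜ : Finset V), ∃ j ∈ B, G.Adj i j) :
    ((Lmat γ q).submatrix (fun i : ↥(Bᶜ) => (i : V))
        (fun j : ↥(Bᶜ) => (j : V))).IsSymm ∧
    ((Lmat γ q).submatrix (fun i : ↥(Bᶜ) => (i : V))
        (fun j : ↥(Bᶜ) => (j : V))).PosDef := by
  classical
  have hγnn : ∀ i j, 0 ≤ γ i j := fun i j => by
    by_cases h : G.Adj i j
    · exact (hpos i j h).le
    · simp [hzero i j h]
  set M := ((Lmat γ q).submatrix (fun i : ↥(Bᶜ) => (i : V))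
      (fun j : ↥(Bᶜ) => (j : V))) with hM
  have hMapply : ∀ i j : ↥(Bᶜ), M i j =
      (if i = j then (∑ k, γ (i : V) k) + q (i : V) else 0) - γ (i : V) (j : V) := by
    intro i j
    rw [hM]
    simp only [Matrix.submatrix_apply, Lmat_apply]
    congr 1
    simp only [Subtype.coe_inj]
  have hsym : M.IsSymm := by
    rw [Matrix.IsSymm]
    ext i j
    rw [Matrix.transpose_apply, hMapply, hMapply, hsymm (j : V) (i : V)]
    by_cases h : i = j
    · subst h; rfl
    · simp [h, Ne.symm h]
  refine ⟨hsym, ?_⟩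
  have herm : M.IsHermitian := by
    ext i j
    simpa [Matrix.conjTranspose_apply] using congrFun (congrFun hsym i) j
  rw [Matrix.posDef_iff_dotProduct_mulVec]
  refine ⟨herm, fun x hx => ?_⟩
  have hdot : star x ⬝ᵥ M *ᵥ x = ∑ i, ∑ j, x i * M i j * x j := by
    simp [dotProduct, Matrix.mulVec, Finset.mul_sum, mul_assoc]
  have step1 : ∀ i : ↥(Bᶜ), ∑ j, x i * M i j * x j
      = ((∑ k, γ (i : V) k) + q (i : V)) * x i ^ 2
        - ∑ j : ↥(Bᶜ), γ (i : V) (j : V) * (x i * x j) := by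
    intro i
    have h1 : ∀ j : ↥(Bᶜ), x i * M i j * x j
        = (if i = j then ((∑ k, γ (i : V) k) + q (i : V)) * x i ^ 2 else 0)
          - γ (i : V) (j : V) * (x i * x j) := by
      intro j
      rw [hMapply]
      by_cases h : i = j
      · subst h; simp; ring
      · simp [h]; ring
    rw [Finset.sum_congr rfl fun j _ => h1 j, Finset.sum_sub_distrib, Finset.sum_ite_eq]
    simp
  set E := ∑ i : ↥(Bᶜ), ∑ j : ↥(Bᶜ), γ (i : V) (j : V) * x i ^ 2 with hE
  set D := ∑ i : ↥(Bᶜ), ∑ j : ↥(Bᶜ), γ (i : V) (j : V) * (x i * x j) with hD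
  set A := ∑ i : ↥(Bᶜ), ∑ j : ↥(Bᶜ), γ (i : V) (j : V) * (x i - x j) ^ 2 with hA
  set Qs := ∑ i : ↥(Bᶜ), q (i : V) * x i ^ 2 with hQs
  set C := ∑ i : ↥(Bᶜ), (∑ k ∈ B, γ (i : V) k) * x i ^ 2 with hC
  have hswap : ∑ i : ↥(Bᶜ), ∑ j : ↥(Bᶜ), γ (i : V) (j : V) * x j ^ 2 = E := by
    rw [hE, Finset.sum_comm]
    exact Finset.sum_congr rfl fun a _ => Finset.sum_congr rfl fun b _ => by rw [hsymm]
  have hsq : A = 2 * E - 2 * D := by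
    have h2 : ∀ (i j : ↥(Bᶜ)), γ (i : V) (j : V) * (x i - x j) ^ 2
        = γ (i : V) (j : V) * x i ^ 2 - 2 * (γ (i : V) (j : V) * (x i * x j))
          + γ (i : V) (j : V) * x j ^ 2 := fun i j => by ring
    rw [hA]
    simp_rw [h2, Finset.sum_add_distrib, Finset.sum_sub_distrib, ← Finset.mul_sum]
    rw [hswap, ← hE, ← hD]
    ring
  have hQform : star x ⬝ᵥ M *ᵥ x = E - D + Qs + C := by
    rw [hdot, Finset.sum_congr rfl fun i _ => step1 i, Finset.sum_sub_distrib]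
    have h3 : ∀ i : ↥(Bᶜ), ((∑ k, γ (i : V) k) + q (i : V)) * x i ^ 2
        = (∑ j : ↥(Bᶜ), γ (i : V) (j : V) * x i ^ 2) + q (i : V) * x i ^ 2
          + (∑ k ∈ B, γ (i : V) k) * x i ^ 2 := by
      intro i
      rw [← Finset.sum_add_sum_compl B (γ (i : V)), ← Finset.sum_coe_sort (Bᶜ) (γ (i : V))]
      simp only [add_mul, Finset.sum_mul]
      ring
    rw [Finset.sum_congr rfl fun i _ => h3 i, Finset.sum_add_distrib, Finset.sum_add_distrib,
      ← hE, ← hQs, ← hC, ← hD]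
    ring
  have hAnn : 0 ≤ A := Finset.sum_nonneg fun i _ => Finset.sum_nonneg fun j _ =>
    mul_nonneg (hγnn _ _) (sq_nonneg _)
  have hQsnn : 0 ≤ Qs := Finset.sum_nonneg fun i _ => mul_nonneg (hq _) (sq_nonneg _)
  have hCnn : 0 ≤ C := Finset.sum_nonneg fun i _ =>
    mul_nonneg (Finset.sum_nonneg fun k _ => hγnn _ _) (sq_nonneg _)
  have hkey : 2 * (star x ⬝ᵥ M *ᵥ x) = A + 2 * Qs + 2 * C := by
    rw [hQform, hsq]; ring
  have hQnn : 0 ≤ star x ⬝ᵥ M *ᵥ x := by linarith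
  rcases hQnn.lt_or_eq with hlt | heq
  · exact hlt
  exfalso
  have hA0 : A = 0 := by linarith
  have hC0 : C = 0 := by linarith
  have hterm : ∀ i j : ↥(Bᶜ), γ (i : V) (j : V) * (x i - x j) ^ 2 = 0 := by
    have h1 := (Finset.sum_eq_zero_iff_of_nonneg (fun (i : ↥(Bᶜ)) _ => Finset.sum_nonneg
      (fun j _ => mul_nonneg (hγnn _ _) (sq_nonneg _) : ∀ j : ↥(Bᶜ), j ∈ Finset.univ →
        (0:ℝ) ≤ γ (i : V) (j : V) * (x i - x j) ^ 2))).1 hA0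
    intro i j
    exact (Finset.sum_eq_zero_iff_of_nonneg (fun j _ =>
      mul_nonneg (hγnn _ _) (sq_nonneg _))).1 (h1 i (Finset.mem_univ i)) j (Finset.mem_univ j)
  set f : ((Bᶜ : Finset V) : Set V) → ℝ := fun v => x ⟨v.1, Finset.mem_coe.1 v.2⟩ with hf
  have hstep : ∀ a b : ((Bᶜ : Finset V) : Set V),
      (G.induce ((Bᶜ : Finset V) : Set V)).Adj a b → f a = f b := by
    intro a b hab
    have hadj' : G.Adj a.1 b.1 := by simpa using hab
    have ht := hterm ⟨a.1, Finset.mem_coe.1 a.2⟩ ⟨b.1, Finset.mem_coe.1 b.2⟩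
    have hγp : 0 < γ a.1 b.1 := hpos _ _ hadj'
    have hsq0 : (x ⟨a.1, Finset.mem_coe.1 a.2⟩ - x ⟨b.1, Finset.mem_coe.1 b.2⟩) ^ 2 = 0 := by
      rcases mul_eq_zero.1 ht with h | h
      · exact absurd h (ne_of_gt hγp)
      · exact h
    have := pow_eq_zero_iff (n := 2) (by norm_num) |>.1 hsq0
    exact sub_eq_zero.1 this
  obtain ⟨i0, hi0, j0, hj0, hadj0⟩ := hadj
  have hconst : ∀ u v : ((Bᶜ : Finset V) : Set V), f u = f v := fun u v =>
    walk_const _ f hstep (hconn.preconnected u v)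
  have hx0 : x ⟨i0, hi0⟩ = 0 := by
    have hCi := (Finset.sum_eq_zero_iff_of_nonneg (fun i _ =>
      mul_nonneg (Finset.sum_nonneg fun k _ => hγnn _ _) (sq_nonneg _))).1 hC0
      ⟨i0, hi0⟩ (Finset.mem_univ _)
    have hsum : 0 < ∑ k ∈ B, γ i0 k :=
      lt_of_lt_of_le (hpos i0 j0 hadj0) (Finset.single_le_sum (fun k _ => hγnn i0 k) hj0)
    have hx2 : x ⟨i0, hi0⟩ ^ 2 = 0 := by
      rcases mul_eq_zero.1 hCi with h | h
      · exact absurd h (ne_of_gt hsum)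
      · exact h
    exact pow_eq_zero_iff (n := 2) (by norm_num) |>.1 hx2
  apply hx
  funext i
  have h5 : f ⟨i.1, Finset.mem_coe.2 i.2⟩ = f ⟨i0, Finset.mem_coe.2 hi0⟩ := hconst _ _
  have h6 : x i = x ⟨i0, hi0⟩ := h5
  rw [h6, hx0]
  rfl
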